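/- arXiv:1401.5707 — 3 statements merged into one kernel-verified Lean document; each statement's English description precedes it below -/
import Mathlib

section
/- Fooling set lower bound for NFAs: Let L ⊆ Σ* be a language, and suppose there exist words x₁,...,x_t, y₁,...,y_t ∈ Σ* such that for all i, xᵢ·yᵢ ∈ L, and for all i ≠ j, xᵢ·yⱼ ∉ L. Then any nondeterministic finite automaton accepting exactly L has at least t states. -/
lemma nfa_evalFrom_append {α σ : Type*} (M : NFA α σ) (S : Set σ) (x y : List α) :
    M.evalFrom S (x ++ y) = M.evalFrom (M.evalFrom S x) y := by
  simp [NFA.evalFrom, List.foldl_append]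

lemma nfa_evalFrom_biUnion {α σ : Type*} (M : NFA α σ) (S : Set σ) (y : List α) :
    M.evalFrom S y = ⋃ p ∈ S, M.evalFrom {p} y := by
  induction y generalizing S with
  | nil => simp [NFA.evalFrom]
  | cons a y ih =>
    have hstep : ∀ T : Set σ, M.evalFrom T (a :: y) = M.evalFrom (M.stepSet T a) y := by
      intro T; rfl
    rw [hstep, ih]
    ext q
    simp only [Set.mem_iUnion, hstep]
    constructor
    · rintro ⟨r, hr, hq⟩
      simp only [NFA.stepSet, Set.mem_iUnion] at hr
      obtain ⟨p, hp, hr⟩ := hr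
      refine ⟨p, hp, ?_⟩
      rw [ih]
      simp only [Set.mem_iUnion, NFA.stepSet]
      exact ⟨r, by simpa using hr, hq⟩
    · rintro ⟨p, hp, hq⟩
      rw [ih] at hq
      simp only [Set.mem_iUnion, NFA.stepSet] at hq
      obtain ⟨r, hr, hq⟩ := hq
      refine ⟨r, ?_, hq⟩
      simp only [NFA.stepSet, Set.mem_iUnion]
      exact ⟨p, hp, by simpa using hr⟩

/-- Fooling set lower bound for NFAs: if there are words `x i, y i` with
`x i ++ y i ∈ L(M)` and `x i ++ y j ∉ L(M)` for `i ≠ j`, then `M` has at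
least `t` states. -/
theorem nfa_fooling_set_lower_bound {α σ : Type*} [Fintype σ]
    (M : NFA α σ) (t : ℕ) (x y : Fin t → List α)
    (hacc : ∀ i, x i ++ y i ∈ M.accepts)
    (hrej : ∀ i j, i ≠ j → x i ++ y j ∉ M.accepts) :
    t ≤ Fintype.card σ := by
  -- For each i, choose a state q i reached after x i from which y i accepts.
  have key : ∀ i : Fin t, ∃ q : σ, q ∈ M.evalFrom M.start (x i) ∧
      ∃ f ∈ M.accept, f ∈ M.evalFrom {q} (y i) := by
    intro i
    have h := NFA.mem_accepts.mp (hacc i)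
    obtain ⟨f, hf, hfe⟩ := h
    rw [nfa_evalFrom_append, nfa_evalFrom_biUnion] at hfe
    simp only [Set.mem_iUnion] at hfe
    obtain ⟨q, hq, hfq⟩ := hfe
    exact ⟨q, hq, f, hf, hfq⟩
  choose q hq1 hq2 using key
  have hinj : Function.Injective q := by
    intro i j hij
    by_contra hne
    apply hrej i j hne
    rw [NFA.mem_accepts]
    obtain ⟨f, hf, hfq⟩ := hq2 j
    refine ⟨f, hf, ?_⟩
    rw [nfa_evalFrom_append, nfa_evalFrom_biUnion]
    simp only [Set.mem_iUnion]
    exact ⟨q j, hij ▸ hq1 i, hfq⟩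
  simpa using Fintype.card_le_of_injective q hinj
end

section
/- The family of subsets S ↦ the word x_S formed by listing the elements of S in increasing order, paired with y_S = x_{complement of S}, forms a fooling set for L_k(k): for every S ⊆ [k], the concatenation x_S · y_S lies in L_k(k), and for every S ≠ T ⊆ [k], the concatenation x_S · y_T does not lie in L_k(k). -/
/-- The words `x_S` (elements of `S ⊆ [k]` in increasing order) together with
`y_S = x_{Sᶜ}` form a fooling set for `L_k(k)`. -/
theorem fooling_set_for_Lk (k : ℕ) (hk : 1 ≤ k) :
    (∀ S : Finset (Fin k),
      (S.sort (· ≤ ·) ++ Sᶜ.sort (· ≤ ·)).length = k ∧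
      (S.sort (· ≤ ·) ++ Sᶜ.sort (· ≤ ·)).Nodup) ∧
    (∀ S T : Finset (Fin k), S ≠ T →
      ¬((S.sort (· ≤ ·) ++ Tᶜ.sort (· ≤ ·)).length = k ∧
        (S.sort (· ≤ ·) ++ Tᶜ.sort (· ≤ ·)).Nodup)) := by
  constructor
  · intro S
    constructor
    · have := Finset.card_le_univ S
      simp only [Finset.card_univ, Fintype.card_fin] at this
      simp [Finset.length_sort, Finset.card_compl]
      omega
    · rw [List.nodup_append]
      refine ⟨S.sort_nodup _, Sᶜ.sort_nodup _, ?_⟩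
      intro a ha b hb hab
      simp only [Finset.mem_sort] at ha hb
      exact (Finset.mem_compl.mp hb) (hab ▸ ha)
  · rintro S T hST ⟨hlen, hnd⟩
    rw [List.nodup_append] at hnd
    obtain ⟨-, -, hdisj⟩ := hnd
    simp only [List.length_append, Finset.length_sort, Finset.card_compl,
      Fintype.card_fin] at hlen
    have h1 := Finset.card_le_univ S
    have h2 := Finset.card_le_univ T
    simp only [Finset.card_univ, Fintype.card_fin] at h1 h2
    have hcard : S.card = T.card := by omega
    apply hST
    apply Finset.eq_of_subset_of_card_le _ hcard.ge
    intro a ha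
    by_contra haT
    exact hdisj a ((Finset.mem_sort _).mpr ha)
      a ((Finset.mem_sort _).mpr (Finset.mem_compl.mpr haT)) rfl
end

section
/- Universal sets split distinctness: Let U be an (n,k)-universal family of subsets of [n]. Then a word w ∈ [n]^k has pairwise distinct symbols if and only if there exists T ∈ U such that the first ⌈k/2⌉ symbols of w are pairwise distinct and lie in T, the last ⌊k/2⌋ symbols of w are pairwise distinct and lie in the complement of T. -/
/-- Universal sets split distinctness: given an `(n,k)`-universal family `U`,
a word `w ∈ [n]^k` has pairwise distinct symbols iff there is `T ∈ U` such that
the first `⌈k/2⌉` symbols of `w` are distinct and lie in `T` while the last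
`⌊k/2⌋` symbols are distinct and lie in `Tᶜ`. -/
theorem universal_splits_distinctness (k n : ℕ) (hk : 1 ≤ k) (hkn : k ≤ n)
    (U : Set (Finset (Fin n)))
    (hU : ∀ S : Finset (Fin n), S.card = k → ∀ S' ⊆ S, ∃ T ∈ U, T ∩ S = S')
    (w : Fin k → Fin n) :
    Function.Injective w ↔
      ∃ T ∈ U,
        Set.InjOn w {c : Fin k | (c : ℕ) < (k + 1) / 2} ∧
        (∀ c : Fin k, (c : ℕ) < (k + 1) / 2 → w c ∈ T) ∧
        Set.InjOn w {c : Fin k | (k + 1) / 2 ≤ (c : ℕ)} ∧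
        (∀ c : Fin k, (k + 1) / 2 ≤ (c : ℕ) → w c ∉ T) := by
  constructor
  · intro hw
    set S : Finset (Fin n) := Finset.image w Finset.univ with hS
    have hcard : S.card = k := by
      rw [hS, Finset.card_image_of_injective _ hw, Finset.card_univ, Fintype.card_fin]
    set S' : Finset (Fin n) :=
      Finset.image w (Finset.univ.filter fun c : Fin k => (c : ℕ) < (k + 1) / 2) with hS'
    have hsub : S' ⊆ S := Finset.image_subset_image (Finset.subset_univ _)
    obtain ⟨T, hTU, hT⟩ := hU S hcard S' hsub
    refine ⟨T, hTU, hw.injOn, ?_, hw.injOn, ?_⟩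
    · intro c hc
      have : w c ∈ S' := Finset.mem_image_of_mem w (by simp [hc])
      have : w c ∈ T ∩ S := hT ▸ this
      exact (Finset.mem_inter.mp this).1
    · intro c hc hcT
      have hwS : w c ∈ S := Finset.mem_image_of_mem w (Finset.mem_univ c)
      have : w c ∈ S' := hT ▸ Finset.mem_inter.mpr ⟨hcT, hwS⟩
      obtain ⟨d, hd, hdc⟩ := Finset.mem_image.mp this
      simp only [Finset.mem_filter] at hd
      have := hw hdc
      omega
  · rintro ⟨T, -, hinj1, hmem1, hinj2, hmem2⟩
    intro a b hab
    rcases lt_or_ge (a : ℕ) ((k + 1) / 2) with ha | ha <;>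
      rcases lt_or_ge (b : ℕ) ((k + 1) / 2) with hb | hb
    · exact hinj1 ha hb hab
    · exact absurd (hab ▸ hmem1 a ha) (hmem2 b hb)
    · exact absurd (hab ▸ hmem1 b hb) (hmem2 a ha)
    · exact hinj2 ha hb hab
end
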